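/- Let 1 < p ≤ q be conjugate exponents (1/p + 1/q = 1), and f, g nonnegative measurable with 0 < ‖f‖_p, ‖g‖_q < ∞ and ‖fg‖₁ > 0. For any ε ∈ (0,1), if ‖fg‖₁ > (1-ε) ‖f‖_p ‖g‖_q, then ‖ f^p/‖f‖_p^p − fg/‖fg‖₁ ‖₁ ≤ √(2ε) + ε. -/

import Mathlib

open MeasureTheory

/-- Key normalized stability lemma: if `∫ f^p = ∫ g^q = 1` and `∫ fg > 1 - ε`, then
`f^p` is close to `fg / ∫ fg` in `L¹`, with bound `√(2ε) + ε`. -/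
lemma key_holder_stability
    {Z : Type*} [MeasurableSpace Z] (ν : Measure Z)
    (f g : Z → ℝ)
    (hf : ∀ z, 0 ≤ f z) (hg : ∀ z, 0 ≤ g z)
    (hmf : Measurable f) (hmg : Measurable g)
    (p q : ℝ) (hp1 : 1 < p) (hp2 : p ≤ 2) (hq2 : 2 ≤ q) (hconj : 1 / p + 1 / q = 1)
    (hintf : Integrable (fun z => f z ^ p) ν)
    (hintg : Integrable (fun z => g z ^ q) ν)
    (hintfg : Integrable (fun z => f z * g z) ν)
    (hf1 : ∫ z, f z ^ p ∂ν = 1) (hg1 : ∫ z, g z ^ q ∂ν = 1)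
    (ε : ℝ) (hε0 : 0 < ε) (hε1 : ε < 1)
    (hgap : 1 - ε < ∫ z, f z * g z ∂ν) :
    ∫ z, |f z ^ p - f z * g z / (∫ w, f w * g w ∂ν)| ∂ν ≤ Real.sqrt (2 * ε) + ε := by
  have hp0 : (0:ℝ) < p := by linarith
  have hq0 : (0:ℝ) < q := by linarith
  have hpne : p ≠ 0 := ne_of_gt hp0
  have hqne : q ≠ 0 := ne_of_gt hq0
  set T := ∫ z, f z * g z ∂ν with hTdef
  have hTpos : 0 < T := lt_of_lt_of_le (by linarith) (le_of_lt hgap)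
  have hTne : T ≠ 0 := ne_of_gt hTpos
  have hconj' : Real.HolderConjugate p q := Real.holderConjugate_iff.mpr ⟨hp1, by simpa [one_div] using hconj⟩
  -- T ≤ 1 by Young's inequality
  have hT1 : T ≤ 1 := by
    have young : ∀ z, f z * g z ≤ f z ^ p / p + g z ^ q / q := fun z =>
      Real.young_inequality_of_nonneg (hf z) (hg z) hconj'
    have hint : Integrable (fun z => f z ^ p / p + g z ^ q / q) ν :=
      (hintf.div_const p).add (hintg.div_const q)
    calc T ≤ ∫ z, (f z ^ p / p + g z ^ q / q) ∂ν := integral_mono hintfg hint young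
      _ = (∫ z, f z ^ p ∂ν) / p + (∫ z, g z ^ q ∂ν) / q := by
          rw [integral_add (hintf.div_const p) (hintg.div_const q), integral_div, integral_div]
      _ = 1 := by rw [hf1, hg1]; simpa [one_div] using hconj
  -- weights for AM-GM
  set θ : ℝ := (2 - p) / p with hθdef
  have hθ0 : 0 ≤ θ := div_nonneg (by linarith) hp0.le
  have hw2 : (0:ℝ) ≤ 2 / q := by positivity
  have hθ' : θ = 2 / p - 1 := by rw [hθdef, sub_div, div_self hpne]
  have h2q : 2 / q = 2 * (1 / q) := by ring
  have h2p : 2 / p = 2 * (1 / p) := by ring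
  have hsum : θ + 2 / q = 1 := by rw [hθ', h2q, h2p]; linarith
  -- the auxiliary function r
  set r : Z → ℝ := fun z => if f z = 0 then 0 else f z ^ (1 - p / 2) * g z with hrdef
  have hmr : Measurable r :=
    Measurable.ite (hmf (measurableSet_singleton 0)) measurable_const
      ((hmf.pow_const _).mul hmg)
  have key1 : ∀ z, f z ^ (p / 2) * r z = f z * g z := by
    intro z
    by_cases hz : f z = 0
    · simp [hrdef, hz]
    · have hzpos : 0 < f z := lt_of_le_of_ne (hf z) (Ne.symm hz)
      simp only [hrdef, if_neg hz]
      rw [← mul_assoc, ← Real.rpow_add hzpos, show p / 2 + (1 - p / 2) = 1 by ring,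
        Real.rpow_one]
  have sqrpow : ∀ (x a : ℝ), 0 ≤ x → (x ^ a) ^ 2 = x ^ (a * 2) := by
    intro x a hx
    rw [← Real.rpow_two, ← Real.rpow_mul hx]
  have key3 : ∀ z, (f z ^ (p / 2)) ^ 2 = f z ^ p := by
    intro z
    rw [sqrpow _ _ (hf z), div_mul_cancel₀ _ (two_ne_zero)]
  have key2 : ∀ z, r z ^ 2 ≤ θ * f z ^ p + (2 / q) * g z ^ q := by
    intro z
    have hrhs0 : 0 ≤ θ * f z ^ p + (2 / q) * g z ^ q :=
      add_nonneg (mul_nonneg hθ0 (Real.rpow_nonneg (hf z) _))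
        (mul_nonneg hw2 (Real.rpow_nonneg (hg z) _))
    by_cases hz : f z = 0
    · simpa [hrdef, hz] using hrhs0
    · have e1 : (f z ^ p) ^ θ = f z ^ (2 - p) := by
        rw [← Real.rpow_mul (hf z), hθdef, mul_div_cancel₀ _ hpne]
      have e2 : (g z ^ q) ^ (2 / q) = g z ^ 2 := by
        rw [← Real.rpow_mul (hg z), mul_div_cancel₀ _ hqne, Real.rpow_two]
      have hr2 : r z ^ 2 = (f z ^ p) ^ θ * (g z ^ q) ^ (2 / q) := by
        simp only [hrdef, if_neg hz]
        rw [mul_pow, e1, e2, sqrpow _ _ (hf z)]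
        norm_num
        left
        ring
      rw [hr2]
      exact Real.geom_mean_le_arith_mean2_weighted hθ0 hw2
        (Real.rpow_nonneg (hf z) _) (Real.rpow_nonneg (hg z) _) hsum
  -- integrability facts
  have hint_r2 : Integrable (fun z => r z ^ 2) ν := by
    refine Integrable.mono' ((hintf.const_mul θ).add (hintg.const_mul (2 / q))) ?_ ?_
    · exact ((hmr.pow_const 2).aestronglyMeasurable)
    · exact Filter.Eventually.of_forall fun z => by
        rw [Real.norm_eq_abs, abs_of_nonneg (sq_nonneg _)]
        simpa using key2 z
  have hint_fp2 : Integrable (fun z => (f z ^ (p / 2)) ^ 2) ν :=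
    hintf.congr (Filter.Eventually.of_forall fun z => (key3 z).symm)
  have hint_d2 : Integrable (fun z => (f z ^ (p / 2) - r z) ^ 2) ν := by
    refine Integrable.mono' ((hint_fp2.const_mul 2).add (hint_r2.const_mul 2)) ?_ ?_
    · exact (((hmf.pow_const _).sub hmr).pow_const 2).aestronglyMeasurable
    · refine Filter.Eventually.of_forall fun z => ?_
      rw [Real.norm_eq_abs, abs_of_nonneg (sq_nonneg _)]
      simp only [Pi.add_apply]
      nlinarith [sq_nonneg (f z ^ (p / 2) + r z)]
  -- Cauchy-Schwarz
  have h22 : Real.HolderConjugate 2 2 := Real.holderConjugate_iff.mpr ⟨one_lt_two, by norm_num⟩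
  have hm1 : MemLp (fun z => f z ^ (p / 2)) (ENNReal.ofReal 2) ν := by
    rw [show ENNReal.ofReal 2 = 2 by simp [ENNReal.ofReal_ofNat]]
    exact (memLp_two_iff_integrable_sq (hmf.pow_const _).aestronglyMeasurable).2 hint_fp2
  have hm2 : MemLp (fun z => |f z ^ (p / 2) - r z|) (ENNReal.ofReal 2) ν := by
    rw [show ENNReal.ofReal 2 = 2 by simp [ENNReal.ofReal_ofNat]]
    refine (memLp_two_iff_integrable_sq ((hmf.pow_const _).sub hmr).abs.aestronglyMeasurable).2 ?_
    exact hint_d2.congr (Filter.Eventually.of_forall fun z => (sq_abs _).symm)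
  have hCS := integral_mul_le_Lp_mul_Lq_of_nonneg h22
    (Filter.Eventually.of_forall fun z => Real.rpow_nonneg (hf z) (p / 2))
    (Filter.Eventually.of_forall fun z => abs_nonneg _) hm1 hm2
  -- compute the two L² norms
  have hI1 : ∫ z, (f z ^ (p / 2)) ^ (2:ℝ) ∂ν = 1 := by
    rw [← hf1]
    exact integral_congr_ae (Filter.Eventually.of_forall fun z =>
      show (f z ^ (p / 2)) ^ (2:ℝ) = f z ^ p by rw [Real.rpow_two, key3 z])
  have hd2exp : ∀ z, (f z ^ (p / 2) - r z) ^ 2 = f z ^ p - 2 * (f z * g z) + r z ^ 2 := by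
    intro z
    have h1 := key1 z
    have h3 := key3 z
    nlinarith [h1, h3]
  have hIr2 : ∫ z, r z ^ 2 ∂ν ≤ 1 := by
    calc ∫ z, r z ^ 2 ∂ν ≤ ∫ z, (θ * f z ^ p + (2 / q) * g z ^ q) ∂ν :=
          integral_mono hint_r2 ((hintf.const_mul θ).add (hintg.const_mul (2 / q))) key2
      _ = θ * (∫ z, f z ^ p ∂ν) + (2 / q) * (∫ z, g z ^ q ∂ν) := by
          rw [integral_add (hintf.const_mul θ) (hintg.const_mul (2 / q)),
            integral_const_mul, integral_const_mul]
      _ = 1 := by rw [hf1, hg1]; simpa using hsum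
  have hId2 : ∫ z, (f z ^ (p / 2) - r z) ^ 2 ∂ν ≤ 2 * ε := by
    have hint5 : Integrable (fun z => f z ^ p - 2 * (f z * g z)) ν :=
      hintf.sub (hintfg.const_mul 2)
    have heq : ∫ z, (f z ^ (p / 2) - r z) ^ 2 ∂ν
        = (∫ z, f z ^ p ∂ν) - 2 * T + ∫ z, r z ^ 2 ∂ν := by
      calc ∫ z, (f z ^ (p / 2) - r z) ^ 2 ∂ν
          = ∫ z, ((f z ^ p - 2 * (f z * g z)) + r z ^ 2) ∂ν :=
            integral_congr_ae (Filter.Eventually.of_forall fun z => hd2exp z)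
        _ = (∫ z, (f z ^ p - 2 * (f z * g z)) ∂ν) + ∫ z, r z ^ 2 ∂ν :=
            integral_add hint5 hint_r2
        _ = (∫ z, f z ^ p ∂ν) - 2 * T + ∫ z, r z ^ 2 ∂ν := by
            rw [integral_sub hintf (hintfg.const_mul 2), integral_const_mul]
    rw [heq, hf1]
    linarith
  have hI2 : ∫ z, |f z ^ (p / 2) - r z| ^ (2:ℝ) ∂ν ≤ 2 * ε := by
    calc ∫ z, |f z ^ (p / 2) - r z| ^ (2:ℝ) ∂ν = ∫ z, (f z ^ (p / 2) - r z) ^ 2 ∂ν :=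
          integral_congr_ae (Filter.Eventually.of_forall fun z =>
            show |f z ^ (p / 2) - r z| ^ (2:ℝ) = (f z ^ (p / 2) - r z) ^ 2 by
              rw [Real.rpow_two, sq_abs])
      _ ≤ 2 * ε := hId2
  -- Step A: ∫ |f^p - fg| ≤ √(2ε)
  have hptA : ∀ z, |f z ^ p - f z * g z| = f z ^ (p / 2) * |f z ^ (p / 2) - r z| := by
    intro z
    have h0 : 0 ≤ f z ^ (p / 2) := Real.rpow_nonneg (hf z) _
    calc |f z ^ p - f z * g z| = |f z ^ (p / 2) * (f z ^ (p / 2) - r z)| := by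
          rw [mul_sub, ← pow_two, key3 z, key1 z]
      _ = f z ^ (p / 2) * |f z ^ (p / 2) - r z| := by rw [abs_mul, abs_of_nonneg h0]
  have hstepA : ∫ z, |f z ^ p - f z * g z| ∂ν ≤ Real.sqrt (2 * ε) := by
    have hnn2ε : (0:ℝ) ≤ 2 * ε := by linarith
    calc ∫ z, |f z ^ p - f z * g z| ∂ν
        = ∫ z, f z ^ (p / 2) * |f z ^ (p / 2) - r z| ∂ν :=
          integral_congr_ae (Filter.Eventually.of_forall fun z => hptA z)
      _ ≤ (∫ z, (f z ^ (p / 2)) ^ (2:ℝ) ∂ν) ^ ((1:ℝ) / 2)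
          * (∫ z, |f z ^ (p / 2) - r z| ^ (2:ℝ) ∂ν) ^ ((1:ℝ) / 2) := hCS
      _ = (∫ z, |f z ^ (p / 2) - r z| ^ (2:ℝ) ∂ν) ^ ((1:ℝ) / 2) := by
          rw [hI1, Real.one_rpow, one_mul]
      _ ≤ (2 * ε) ^ ((1:ℝ) / 2) := by
          refine Real.rpow_le_rpow ?_ hI2 (by norm_num)
          exact integral_nonneg fun z => by positivity
      _ = Real.sqrt (2 * ε) := by rw [Real.sqrt_eq_rpow]
  -- Step B: triangle inequality for the normalization of fg
  have hTinv : 1 ≤ 1 / T := by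
    rw [le_div_iff₀ hTpos]; simpa using hT1
  have hptw : ∀ z, |f z ^ p - f z * g z / T| ≤
      |f z ^ p - f z * g z| + (1 / T - 1) * (f z * g z) := by
    intro z
    have hfg0 : 0 ≤ f z * g z := mul_nonneg (hf z) (hg z)
    have e : f z * g z - f z * g z / T = -((1 / T - 1) * (f z * g z)) := by ring
    have hle : -((1 / T - 1) * (f z * g z)) ≤ 0 := by
      have : 0 ≤ (1 / T - 1) * (f z * g z) :=
        mul_nonneg (by linarith) hfg0
      linarith
    have h2 : |f z * g z - f z * g z / T| = (1 / T - 1) * (f z * g z) := by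
      rw [e, abs_of_nonpos hle]; ring
    calc |f z ^ p - f z * g z / T|
        = |(f z ^ p - f z * g z) + (f z * g z - f z * g z / T)| := by congr 1; ring
      _ ≤ |f z ^ p - f z * g z| + |f z * g z - f z * g z / T| := abs_add_le _ _
      _ = |f z ^ p - f z * g z| + (1 / T - 1) * (f z * g z) := by rw [h2]
  have hintL : Integrable (fun z => |f z ^ p - f z * g z / T|) ν :=
    (hintf.sub (hintfg.div_const T)).abs
  have hint6 : Integrable (fun z => |f z ^ p - f z * g z|) ν := (hintf.sub hintfg).abs
  have hintR : Integrable
      (fun z => |f z ^ p - f z * g z| + (1 / T - 1) * (f z * g z)) ν :=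
    hint6.add (hintfg.const_mul _)
  have hfin : (1 / T - 1) * T = 1 - T := by
    rw [sub_mul, one_div, inv_mul_cancel₀ hTne, one_mul]
  calc ∫ z, |f z ^ p - f z * g z / T| ∂ν
      ≤ ∫ z, (|f z ^ p - f z * g z| + (1 / T - 1) * (f z * g z)) ∂ν :=
        integral_mono hintL hintR hptw
    _ = (∫ z, |f z ^ p - f z * g z| ∂ν) + (1 / T - 1) * T := by
        rw [integral_add hint6 (hintfg.const_mul _), integral_const_mul]
    _ = (∫ z, |f z ^ p - f z * g z| ∂ν) + (1 - T) := by rw [hfin]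
    _ ≤ Real.sqrt (2 * ε) + ε := by
        have := hstepA
        linarith

theorem holder_stability_theorem
    {Z : Type*} [MeasurableSpace Z] (ν : Measure Z)
    (f g : Z → ℝ)
    (hf : ∀ z, 0 ≤ f z) (hg : ∀ z, 0 ≤ g z)
    (hmf : Measurable f) (hmg : Measurable g)
    (p q : ℝ) (hp1 : 1 < p) (hpq : p ≤ q) (hconj : 1 / p + 1 / q = 1)
    (hintf : Integrable (fun z => f z ^ p) ν)
    (hintg : Integrable (fun z => g z ^ q) ν)
    (hintfg : Integrable (fun z => f z * g z) ν)
    (hfpos : 0 < ∫ z, f z ^ p ∂ν) (hgpos : 0 < ∫ z, g z ^ q ∂ν)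
    (hfgpos : 0 < ∫ z, f z * g z ∂ν)
    (ε : ℝ) (hε0 : 0 < ε) (hε1 : ε < 1)
    (hgap : ∫ z, f z * g z ∂ν >
      (1 - ε) * ((∫ z, f z ^ p ∂ν) ^ (1 / p) * (∫ z, g z ^ q ∂ν) ^ (1 / q))) :
    ∫ z, |f z ^ p / (∫ w, f w ^ p ∂ν) -
        f z * g z / (∫ w, f w * g w ∂ν)| ∂ν
      ≤ Real.sqrt (2 * ε) + ε := by
  have hp0 : (0:ℝ) < p := by linarith
  have hq0 : (0:ℝ) < q := by
    have h1p : 1 / p < 1 := by rw [div_lt_one hp0]; exact hp1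
    have : 0 < 1 / q := by linarith
    exact one_div_pos.mp this
  have hpne : p ≠ 0 := ne_of_gt hp0
  have hqne : q ≠ 0 := ne_of_gt hq0
  have hinvp : p * (1 / p) = 1 := by field_simp
  have hinvq : q * (1 / q) = 1 := by field_simp
  have h1 : 1 / q ≤ 1 / p := one_div_le_one_div_of_le hp0 hpq
  have hp2 : p ≤ 2 := by nlinarith [hinvp, h1]
  have hq2 : 2 ≤ q := by nlinarith [hinvq, h1]
  set A : ℝ := (∫ z, f z ^ p ∂ν) ^ (1 / p) with hAdef
  set B : ℝ := (∫ z, g z ^ q ∂ν) ^ (1 / q) with hBdef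
  have hA : 0 < A := Real.rpow_pos_of_pos hfpos _
  have hB : 0 < B := Real.rpow_pos_of_pos hgpos _
  have hAp : A ^ p = ∫ z, f z ^ p ∂ν := by
    rw [hAdef, ← Real.rpow_mul hfpos.le, one_div, inv_mul_cancel₀ hpne, Real.rpow_one]
  have hBq : B ^ q = ∫ z, g z ^ q ∂ν := by
    rw [hBdef, ← Real.rpow_mul hgpos.le, one_div, inv_mul_cancel₀ hqne, Real.rpow_one]
  set F : Z → ℝ := fun z => f z / A with hFdef
  set G : Z → ℝ := fun z => g z / B with hGdef
  have hFp : ∀ z, F z ^ p = f z ^ p / A ^ p := fun z => Real.div_rpow (hf z) hA.le p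
  have hGq : ∀ z, G z ^ q = g z ^ q / B ^ q := fun z => Real.div_rpow (hg z) hB.le q
  have hFG : ∀ z, F z * G z = f z * g z / (A * B) := fun z => div_mul_div_comm _ _ _ _
  have hintF : Integrable (fun z => F z ^ p) ν := by
    refine (hintf.div_const (A ^ p)).congr ?_
    exact Filter.Eventually.of_forall fun z => (hFp z).symm
  have hintG : Integrable (fun z => G z ^ q) ν := by
    refine (hintg.div_const (B ^ q)).congr ?_
    exact Filter.Eventually.of_forall fun z => (hGq z).symm
  have hintFG : Integrable (fun z => F z * G z) ν := by
    refine (hintfg.div_const (A * B)).congr ?_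
    exact Filter.Eventually.of_forall fun z => (hFG z).symm
  have hF1 : ∫ z, F z ^ p ∂ν = 1 := by
    rw [show (fun z => F z ^ p) = fun z => f z ^ p / A ^ p from funext hFp, integral_div,
      hAp, div_self (ne_of_gt hfpos)]
  have hG1 : ∫ z, G z ^ q ∂ν = 1 := by
    rw [show (fun z => G z ^ q) = fun z => g z ^ q / B ^ q from funext hGq, integral_div,
      hBq, div_self (ne_of_gt hgpos)]
  have hIFG : ∫ z, F z * G z ∂ν = (∫ z, f z * g z ∂ν) / (A * B) := by
    rw [show (fun z => F z * G z) = fun z => f z * g z / (A * B) from funext hFG, integral_div]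
  have hgap' : 1 - ε < ∫ z, F z * G z ∂ν := by
    rw [hIFG, lt_div_iff₀ (by positivity)]
    exact hgap
  have hkey := key_holder_stability ν F G
    (fun z => div_nonneg (hf z) hA.le) (fun z => div_nonneg (hg z) hB.le)
    (hmf.div_const A) (hmg.div_const B) p q hp1 hp2 hq2 hconj
    hintF hintG hintFG hF1 hG1 ε hε0 hε1 hgap'
  have hTne : (∫ z, f z * g z ∂ν) ≠ 0 := ne_of_gt hfgpos
  have hABne : A * B ≠ 0 := by positivity
  have hptw : ∀ z, |F z ^ p - F z * G z / (∫ w, F w * G w ∂ν)|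
      = |f z ^ p / (∫ w, f w ^ p ∂ν) - f z * g z / (∫ w, f w * g w ∂ν)| := by
    intro z
    rw [hIFG, hFp z, hFG z, hAp]
    congr 2
    field_simp
  calc ∫ z, |f z ^ p / (∫ w, f w ^ p ∂ν) - f z * g z / (∫ w, f w * g w ∂ν)| ∂ν
      = ∫ z, |F z ^ p - F z * G z / (∫ w, F w * G w ∂ν)| ∂ν :=
        integral_congr_ae (Filter.Eventually.of_forall fun z => (hptw z).symm)
    _ ≤ Real.sqrt (2 * ε) + ε := hkey
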